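/- Let p ≥ 2, k ≥ 3 be integers, ε ∈ {−1,0,1}, u ≥ 0, v ≥ u. Define ψ₀(p,u,v), ψ₁(p,u,v), ψ₂(p,u,v) by: ψ₂ = (p^{2k−3} − ε p^{k−2})·p^{v(2k−3)}·p^{k+1}/((p^{2k−2}−1)(p^{k}−1)); ψ₁ = (p^{2k−3} − ε p^{k−2})·[ p^{v(2k−3)}·p^{k−1}(p²−1)/((p^{2k−2}−1)(p^{k}−1)(p^{k−2}−1)) − p^{(v−u)(2k−3)} p^{u(k−1)}·p(p^{k−1}−1)/((p^{2k−3}−1)(p^{k}−1)(p^{k−2}−1)) ] + (ε p^{k−2} − 1)·p^{u(k−1)}·p^{k}/((p^{2k−3}−1)(p^{k}−1)); and ψ₀ as in the theorem. Then ψ₀(p,u,v) + ψ₁(p,u,v) + ψ₂(p,u,v) = ∑_{j=0}^{u} p^{j(k−1)} C(v−j), where C(w) = ∑_{j=0}^{w} p^{j(2k−3)} − ε p^{k−2} ∑_{j=0}^{w−1} p^{j(2k−3)}, with ψ₀ defined as: ψ₀ = (p^{2k−3} − ε p^{k−2})·[ p^{v(2k−3)}·p^{k−2}(p−1)/((p^{2k−3}−1)(p^{2k−2}−1)(p^{k−2}−1))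 − p^{(v−u)(2k−3)} p^{u(k−1)}·(p−1)/((p^{2k−3}−1)(p^{k}−1)(p^{k−2}−1)) ] + (ε p^{k−2} − 1)·[ p^{u(k−1)}·p^{k−1}(p−1)/((p^{2k−3}−1)(p^{k}−1)(p^{k−1}−1)) − 1/((p^{2k−3}−1)(p^{k−1}−1)) ]. -/

import Mathlib

lemma Cfac_eq' (q : ℚ) (ε : ℚ) (e c : ℕ) (n : ℕ) (hA : q ^ e ≠ 1) :
    ((∑ j ∈ Finset.range (n + 1), q ^ (j * e)) -
      ε * q ^ c * ∑ j ∈ Finset.range n, q ^ (j * e)) =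
    ((q ^ e) ^ (n + 1) - 1) / (q ^ e - 1) -
      ε * q ^ c * (((q ^ e) ^ n - 1) / (q ^ e - 1)) := by
  simp only [pow_mul']
  rw [geom_sum_eq hA, geom_sum_eq hA]

lemma sum_closed (P B ε : ℚ) (hA : P * B ≠ 1) (hB : B ≠ 1) (hP : P ≠ 1)
    (u w : ℕ) :
    ∑ j ∈ Finset.range (u + 1),
        P ^ j * (((P * B) ^ (u + w - j + 1) - 1) / (P * B - 1) -
          ε * B * (((P * B) ^ (u + w - j) - 1) / (P * B - 1)))
      = (P * B - ε * B) * ((P * B) ^ (u + w) * B - (P * B) ^ w * P ^ u) /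
          ((P * B - 1) * (B - 1))
        - (1 - ε * B) * (P * P ^ u - 1) / ((P * B - 1) * (P - 1)) := by
  have hA' : P * B - 1 ≠ 0 := sub_ne_zero.mpr hA
  have hB' : B - 1 ≠ 0 := sub_ne_zero.mpr hB
  have hP' : P - 1 ≠ 0 := sub_ne_zero.mpr hP
  induction u generalizing w with
  | zero =>
    simp only [zero_add, Finset.sum_range_one, pow_zero, one_mul, Nat.sub_zero]
    field_simp
    ring
  | succ u ih =>
    rw [Finset.sum_range_succ]
    simp only [show u + 1 + w = u + (w + 1) from by omega]
    rw [ih (w + 1)]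
    simp only [show u + (w + 1) - (u + 1) = w from by omega]
    field_simp
    ring

set_option maxHeartbeats 1600000 in
lemma final_id (q b e X Y Z : ℚ)
    (hd1 : q*b*b - 1 ≠ 0) (hd2 : q*b*(q*b) - 1 ≠ 0) (hd3 : b - 1 ≠ 0)
    (hd4 : q*b - 1 ≠ 0) (hd5 : q*(q*b) - 1 ≠ 0) :
    (q*b*b - e*b) * (X*b*(q-1)/((q*b*b-1)*(q*b*(q*b)-1)*(b-1))
        - Y*Z*(q-1)/((q*b*b-1)*(q*(q*b)-1)*(b-1)))
      + (e*b-1)*(Z*(q*b)*(q-1)/((q*b*b-1)*(q*(q*b)-1)*(q*b-1))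
        - 1/((q*b*b-1)*(q*b-1)))
      + ((q*b*b-e*b)*(X*(q*b)*(q^2-1)/((q*b*(q*b)-1)*(q*(q*b)-1)*(b-1))
          - Y*Z*(q*(q*b-1))/((q*b*b-1)*(q*(q*b)-1)*(b-1)))
        + (e*b-1)*Z*(q*(q*b))/((q*b*b-1)*(q*(q*b)-1)))
      + (q*b*b-e*b)*X*(q*(q*(q*b)))/((q*b*(q*b)-1)*(q*(q*b)-1))
    = (q*b*b-e*b)*(X*b - Y*Z)/((q*b*b-1)*(b-1))
      - (1-e*b)*(q*b*Z-1)/((q*b*b-1)*(q*b-1)) := by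
  have h1 : b*(q-1)/((q*b*b-1)*(q*b*(q*b)-1)*(b-1))
      + (q*b)*(q^2-1)/((q*b*(q*b)-1)*(q*(q*b)-1)*(b-1))
      + q*(q*(q*b))/((q*b*(q*b)-1)*(q*(q*b)-1))
      = b/((q*b*b-1)*(b-1)) := by
    rw [div_add_div _ _ (by simp [*]) (by simp [*]), div_add_div _ _ (by simp [*]) (by simp [*]),
      div_eq_div_iff (by simp [*]) (by simp [*])]
    ring
  have h2 : (q-1)/((q*b*b-1)*(q*(q*b)-1)*(b-1))
      + q*(q*b-1)/((q*b*b-1)*(q*(q*b)-1)*(b-1))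
      = 1/((q*b*b-1)*(b-1)) := by
    rw [div_add_div _ _ (by simp [*]) (by simp [*]),
      div_eq_div_iff (by simp [*]) (by simp [*])]
    ring
  have h3 : (q*b)*(q-1)/((q*b*b-1)*(q*(q*b)-1)*(q*b-1))
      + q*(q*b)/((q*b*b-1)*(q*(q*b)-1))
      = (q*b)/((q*b*b-1)*(q*b-1)) := by
    rw [div_add_div _ _ (by simp [*]) (by simp [*]),
      div_eq_div_iff (by simp [*]) (by simp [*])]
    ring
  linear_combination ((q*b*b-e*b)*X) * h1 - ((q*b*b-e*b)*(Y*Z)) * h2 + ((e*b-1)*Z) * h3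



/-- The local factor C_{p,D}(v) = ∑_{j=0}^{v} p^{j(2k−3)} − ε p^{k−2} ∑_{j=0}^{v−1} p^{j(2k−3)}. -/
noncomputable def Cfac (p k : ℕ) (ε : ℚ) (v : ℕ) : ℚ :=
  (∑ j ∈ Finset.range (v + 1), (p : ℚ) ^ (j * (2 * k - 3))) -
    ε * (p : ℚ) ^ (k - 2) * ∑ j ∈ Finset.range v, (p : ℚ) ^ (j * (2 * k - 3))

set_option maxHeartbeats 1600000 in
/-- ψ₀ + ψ₁ + ψ₂ = ∑_{j=0}^{u} p^{j(k−1)} C(v−j), where ψ₀, ψ₁, ψ₂ are the local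
factors of Theorem 3.3. -/
theorem stmt_16 (p k : ℕ) (hp : 2 ≤ p) (hk : 3 ≤ k) (ε : ℚ)
    (hε : ε = -1 ∨ ε = 0 ∨ ε = 1) (u v : ℕ) (huv : u ≤ v) :
    (((p : ℚ) ^ (2 * k - 3) - ε * (p : ℚ) ^ (k - 2)) *
        ((p : ℚ) ^ (v * (2 * k - 3)) * (p : ℚ) ^ (k - 2) * ((p : ℚ) - 1) /
            (((p : ℚ) ^ (2 * k - 3) - 1) * ((p : ℚ) ^ (2 * k - 2) - 1) *
              ((p : ℚ) ^ (k - 2) - 1)) -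
          (p : ℚ) ^ ((v - u) * (2 * k - 3)) * (p : ℚ) ^ (u * (k - 1)) * ((p : ℚ) - 1) /
            (((p : ℚ) ^ (2 * k - 3) - 1) * ((p : ℚ) ^ k - 1) * ((p : ℚ) ^ (k - 2) - 1))) +
      (ε * (p : ℚ) ^ (k - 2) - 1) *
        ((p : ℚ) ^ (u * (k - 1)) * (p : ℚ) ^ (k - 1) * ((p : ℚ) - 1) /
            (((p : ℚ) ^ (2 * k - 3) - 1) * ((p : ℚ) ^ k - 1) * ((p : ℚ) ^ (k - 1) - 1)) -
          1 / (((p : ℚ) ^ (2 * k - 3) - 1) * ((p : ℚ) ^ (k - 1) - 1)))) +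
      (((p : ℚ) ^ (2 * k - 3) - ε * (p : ℚ) ^ (k - 2)) *
        ((p : ℚ) ^ (v * (2 * k - 3)) * (p : ℚ) ^ (k - 1) * ((p : ℚ) ^ 2 - 1) /
            (((p : ℚ) ^ (2 * k - 2) - 1) * ((p : ℚ) ^ k - 1) * ((p : ℚ) ^ (k - 2) - 1)) -
          (p : ℚ) ^ ((v - u) * (2 * k - 3)) * (p : ℚ) ^ (u * (k - 1)) *
            ((p : ℚ) * ((p : ℚ) ^ (k - 1) - 1)) /
            (((p : ℚ) ^ (2 * k - 3) - 1) * ((p : ℚ) ^ k - 1) * ((p : ℚ) ^ (k - 2) - 1))) +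
      (ε * (p : ℚ) ^ (k - 2) - 1) * (p : ℚ) ^ (u * (k - 1)) * (p : ℚ) ^ k /
        (((p : ℚ) ^ (2 * k - 3) - 1) * ((p : ℚ) ^ k - 1))) +
      ((p : ℚ) ^ (2 * k - 3) - ε * (p : ℚ) ^ (k - 2)) * (p : ℚ) ^ (v * (2 * k - 3)) *
        (p : ℚ) ^ (k + 1) / (((p : ℚ) ^ (2 * k - 2) - 1) * ((p : ℚ) ^ k - 1)) =
    ∑ j ∈ Finset.range (u + 1), (p : ℚ) ^ (j * (k - 1)) * Cfac p k ε (v - j) := by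
  obtain ⟨m, rfl⟩ : ∃ m, k = m + 3 := ⟨k - 3, by omega⟩
  obtain ⟨w, rfl⟩ : ∃ w, v = u + w := ⟨v - u, by omega⟩
  have hq1 : (1 : ℚ) < (p : ℚ) := by exact_mod_cast (by omega : (1:ℕ) < p)
  have hone : ∀ n : ℕ, n ≠ 0 → ((p : ℚ) ^ n) ≠ 1 :=
    fun n hn => ne_of_gt (one_lt_pow₀ hq1 hn)
  simp only [show 2 * (m + 3) - 3 = 2 * m + 3 from by omega,
    show m + 3 - 2 = m + 1 from by omega,
    show 2 * (m + 3) - 2 = 2 * m + 4 from by omega,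
    show m + 3 - 1 = m + 2 from by omega,
    show m + 3 + 1 = m + 4 from by omega,
    show u + w - u = w from by omega]
  set B : ℚ := (p : ℚ) ^ (m + 1) with hBdef
  have h12 : (p : ℚ) ^ (m + 2) = (p : ℚ) * B := by rw [hBdef]; ring
  have h13 : (p : ℚ) ^ (m + 3) = (p : ℚ) * ((p : ℚ) * B) := by rw [hBdef]; ring
  have h14 : (p : ℚ) ^ (m + 4) = (p : ℚ) * ((p : ℚ) * ((p : ℚ) * B)) := by rw [hBdef]; ring
  have h23 : (p : ℚ) ^ (2 * m + 3) = ((p : ℚ) * B) * B := by rw [hBdef]; ring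
  have h24 : (p : ℚ) ^ (2 * m + 4) = ((p : ℚ) * B) * ((p : ℚ) * B) := by rw [hBdef]; ring
  have hX : (p : ℚ) ^ ((u + w) * (2 * m + 3)) = (((p : ℚ) * B) * B) ^ (u + w) := by
    rw [pow_mul', h23]
  have hY : (p : ℚ) ^ (w * (2 * m + 3)) = (((p : ℚ) * B) * B) ^ w := by
    rw [pow_mul', h23]
  have hZ : (p : ℚ) ^ (u * (m + 2)) = ((p : ℚ) * B) ^ u := by
    rw [pow_mul', h12]
  have hnA : ((p : ℚ) * B) * B ≠ 1 := by rw [← h23]; exact hone _ (by omega)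
  have hnB : B ≠ 1 := by rw [hBdef]; exact hone _ (by omega)
  have hnP : (p : ℚ) * B ≠ 1 := by rw [← h12]; exact hone _ (by omega)
  have hd1 : ((p : ℚ) * B) * B - 1 ≠ 0 := sub_ne_zero.mpr hnA
  have hd2 : ((p : ℚ) * B) * ((p : ℚ) * B) - 1 ≠ 0 := by
    rw [← h24]; exact sub_ne_zero.mpr (hone _ (by omega))
  have hd3 : B - 1 ≠ 0 := sub_ne_zero.mpr hnB
  have hd4 : (p : ℚ) * B - 1 ≠ 0 := sub_ne_zero.mpr hnP
  have hd5 : (p : ℚ) * ((p : ℚ) * B) - 1 ≠ 0 := by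
    rw [← h13]; exact sub_ne_zero.mpr (hone _ (by omega))
  have hrhs : (∑ j ∈ Finset.range (u + 1),
        (p : ℚ) ^ (j * (m + 2)) * Cfac p (m + 3) ε (u + w - j))
      = (((p : ℚ) * B) * B - ε * B) *
            ((((p : ℚ) * B) * B) ^ (u + w) * B - (((p : ℚ) * B) * B) ^ w * ((p : ℚ) * B) ^ u) /
            ((((p : ℚ) * B) * B - 1) * (B - 1))
        - (1 - ε * B) * (((p : ℚ) * B) * ((p : ℚ) * B) ^ u - 1) /
            ((((p : ℚ) * B) * B - 1) * ((p : ℚ) * B - 1)) := by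
    rw [← sum_closed ((p : ℚ) * B) B ε hnA hnB hnP u w]
    refine Finset.sum_congr rfl fun j hj => ?_
    unfold Cfac
    simp only [show 2 * (m + 3) - 3 = 2 * m + 3 from by omega,
      show m + 3 - 2 = m + 1 from by omega]
    rw [Cfac_eq' (p : ℚ) ε (2 * m + 3) (m + 1) (u + w - j) (hone _ (by omega))]
    rw [show (p : ℚ) ^ (j * (m + 2)) = (((p : ℚ)) ^ (m + 2)) ^ j from pow_mul' _ _ _,
      h12, h23, ← hBdef]
  rw [hrhs, hX, hY, hZ, h23, h24, h13, h14, h12]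
  exact final_id _ _ _ _ _ _ hd1 hd2 hd3 hd4 hd5
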